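/- For every graph G and every edge uv of G, the maximum matching width of G/uv (the graph obtained by contracting uv) is at most the maximum matching width of G. -/

import Mathlib

open SimpleGraph

/-- Size of a maximum matching in the bipartite graph of edges of `G` crossing `(A, Aᶜ)`. -/
noncomputable def mmVal {V : Type*} (G : SimpleGraph V) (A : Set V) : ℕ :=
  sSup {n | ∃ M : Finset (V × V),
    (∀ p ∈ M, p.1 ∈ A ∧ p.2 ∉ A ∧ G.Adj p.1 p.2) ∧
    (∀ p ∈ M, ∀ q ∈ M, p ≠ q → p.1 ≠ q.1 ∧ p.2 ≠ q.2) ∧ M.card = n}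

/-- A branch-decomposition over the vertex set of `G`: a finite subcubic tree together with a
bijection between its leaves and the vertices of `G`. -/
structure BranchDecomp {V : Type*} (G : SimpleGraph V) where
  B : Type
  finB : Finite B
  T : SimpleGraph B
  isTree : T.IsTree
  subcubic : ∀ b : B, (T.neighborSet b).ncard = 1 ∨ (T.neighborSet b).ncard = 3
  L : {b : B // (T.neighborSet b).ncard = 1} ≃ V

/-- The set of vertices of `G` whose leaves lie on the `u`-side of the tree edge `uw`. -/
noncomputable def BranchDecomp.side {V : Type*} {G : SimpleGraph V} (D : BranchDecomp G)
    (u w : D.B) : Set V :=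
  {x : V | (D.T.deleteEdges {s(u, w)}).Reachable (D.L.symm x).1 u}

/-- The width of a branch-decomposition is at most `k`. -/
def BranchDecomp.widthLE {V : Type*} {G : SimpleGraph V} (D : BranchDecomp G) (k : ℕ) : Prop :=
  ∀ u w : D.B, D.T.Adj u w → mmVal G (D.side u w) ≤ k

/-- The maximum matching width of `G`. -/
noncomputable def mmw {V : Type*} (G : SimpleGraph V) : ℕ :=
  sInf {k | ∃ D : BranchDecomp G, D.widthLE k}
/-- `H` is a minor of `G`: there is a family of nonempty, pairwise disjoint, connected branch
sets in `G` indexed by the vertices of `H`, with edges of `H` realized by edges of `G`. -/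
def IsMinor {W : Type*} {V : Type*} (H : SimpleGraph W) (G : SimpleGraph V) : Prop :=
  ∃ φ : W → Set V,
    (∀ w, (φ w).Nonempty) ∧
    (∀ w, (G.induce (φ w)).Connected) ∧
    (∀ w w', w ≠ w' → Disjoint (φ w) (φ w')) ∧
    (∀ w w', H.Adj w w' → ∃ a ∈ φ w, ∃ b ∈ φ w', G.Adj a b)

/-- The `k × k` grid graph: vertices `(i, j)`, edges between vertices at Manhattan distance 1. -/
def gridGraph (k : ℕ) : SimpleGraph (Fin k × Fin k) :=
  SimpleGraph.fromRel (fun p q =>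
    (p.1 = q.1 ∧ (p.2 : ℕ) + 1 = (q.2 : ℕ)) ∨ (p.2 = q.2 ∧ (p.1 : ℕ) + 1 = (q.1 : ℕ)))

/-- The row `R_j` of the `k × k` grid. -/
def gridRow (k : ℕ) (j : Fin k) : Set (Fin k × Fin k) := {p | p.2 = j}

/-- The column `C_i` of the `k × k` grid. -/
def gridCol (k : ℕ) (i : Fin k) : Set (Fin k × Fin k) := {p | p.1 = i}

/-- `X` is small: `mm(X) < k` and `X` contains no full row. -/
def GridSmall (k : ℕ) (X : Set (Fin k × Fin k)) : Prop :=
  mmVal (gridGraph k) X < k ∧ ∀ j : Fin k, ¬ gridRow k j ⊆ X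

/-- `G` is `k`-connected: `|V(G)| ≥ k` and deleting fewer than `k` vertices leaves `G`
connected. -/
def KConnected {V : Type*} (k : ℕ) (G : SimpleGraph V) : Prop :=
  k ≤ Nat.card V ∧ ∀ X : Set V, X.ncard < k → (G.induce Xᶜ).Connected

/-- A block of `G`: a bridge (with its two endpoints), or a maximal 2-connected induced
subgraph. -/
def IsBlock {V : Type*} (G : SimpleGraph V) (Bs : Set V) : Prop :=
  (∃ a b : V, G.Adj a b ∧ G.IsBridge s(a, b) ∧ Bs = {a, b}) ∨
  (KConnected 2 (G.induce Bs) ∧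
    ∀ B' : Set V, Bs ⊆ B' → KConnected 2 (G.induce B') → B' = Bs)

/-- A tree-representation of `G`: a finite subcubic tree `T` and nontrivial subtrees `F x`
for each vertex `x` such that adjacent vertices have intersecting subtrees. -/
structure TreeRep {V : Type*} (G : SimpleGraph V) where
  B : Type
  finB : Finite B
  T : SimpleGraph B
  isTree : T.IsTree
  subcubic : ∀ b : B, (T.neighborSet b).ncard = 1 ∨ (T.neighborSet b).ncard = 3
  F : V → Set B
  nontrivial : ∀ x : V, ∃ u w : B, u ∈ F x ∧ w ∈ F x ∧ T.Adj u w
  subtree : ∀ x : V, (T.induce (F x)).Connected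
  adjMeet : ∀ x y : V, G.Adj x y → (F x ∩ F y).Nonempty

/-- Every edge of the tree lies in at most `k` of the subtrees. -/
def TreeRep.widthLE {V : Type*} {G : SimpleGraph V} (R : TreeRep G) (k : ℕ) : Prop :=
  ∀ u w : R.B, R.T.Adj u w → {x : V | u ∈ R.F x ∧ w ∈ R.F x}.ncard ≤ k

/-- Contraction of the edge `uv` of `G` (the merged vertex is `u`). -/
def contractEdge {V : Type*} (G : SimpleGraph V) (u v : V) : SimpleGraph {x : V // x ≠ v} :=
  SimpleGraph.fromRel (fun x y =>
    G.Adj x.1 y.1 ∨ (x.1 = u ∧ G.Adj v y.1) ∨ (y.1 = u ∧ G.Adj v x.1))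


lemma reach_transfer {A A' : Type*} {H : SimpleGraph A} {H' : SimpleGraph A'} (f : A → A')
    {p q : A} (h : H.Reachable p q)
    (hstep : ∀ a b, H.Adj a b → H.Reachable b q → H'.Reachable (f a) (f b)) :
    H'.Reachable (f p) (f q) := by
  obtain ⟨w⟩ := h
  induction w with
  | nil => exact Reachable.refl _
  | cons h w ih => exact (hstep _ _ h ⟨w⟩).trans (ih (fun a b ha hb => hstep a b ha hb))

lemma reach_closed {A : Type*} {H : SimpleGraph A} {S : Set A}
    (hS : ∀ a b, H.Adj a b → a ∈ S → b ∈ S) {p q : A} (h : H.Reachable p q) (hp : p ∈ S) :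
    q ∈ S := by
  obtain ⟨w⟩ := h
  induction w with
  | nil => exact hp
  | cons h w ih => exact ih (hS _ _ h hp)
section Helpers

lemma sym2_subtype_eq {B : Type} {P : B → Prop} {a b x y : {b : B // P b}}
    (h : s(a.1, b.1) = s(x.1, y.1)) : s(a, b) = s(x, y) := by
  rw [Sym2.eq_iff] at h ⊢
  rcases h with ⟨h1, h2⟩ | ⟨h1, h2⟩
  · exact Or.inl ⟨Subtype.ext h1, Subtype.ext h2⟩
  · exact Or.inr ⟨Subtype.ext h1, Subtype.ext h2⟩

lemma bridge_of_tree {B : Type} {T : SimpleGraph B} (hT : T.IsTree) {x y : B}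
    (hxy : T.Adj x y) : ¬ (T.deleteEdges {s(x, y)}).Reachable x y := by
  have hb := isAcyclic_iff_forall_edge_isBridge.mp hT.IsAcyclic
    ((T.mem_edgeSet).mpr hxy)
  exact isBridge_iff.mp hb

section Construction

variable {B : Type} {T : SimpleGraph B} {tv s a₀ b₀ : B}

open Classical in
/-- collapse map sending `tv` and `s` to `a₀`. -/
noncomputable def collapse (tv s a₀ : B) (ha_tv : a₀ ≠ tv) (ha_s : a₀ ≠ s) :
    B → {b : B // b ≠ tv ∧ b ≠ s} := fun b =>
  if h : b = tv ∨ b = s then ⟨a₀, ha_tv, ha_s⟩ else ⟨b, not_or.mp h⟩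

lemma collapse_fix {ha_tv : a₀ ≠ tv} {ha_s : a₀ ≠ s} {b : B} (h1 : b ≠ tv) (h2 : b ≠ s) :
    collapse tv s a₀ ha_tv ha_s b = ⟨b, h1, h2⟩ := by
  unfold collapse; exact dif_neg (not_or.mpr ⟨h1, h2⟩)

lemma collapse_mem {ha_tv : a₀ ≠ tv} {ha_s : a₀ ≠ s} {b : B} (h : b = tv ∨ b = s) :
    collapse tv s a₀ ha_tv ha_s b = ⟨a₀, ha_tv, ha_s⟩ := by
  unfold collapse; exact dif_pos h

variable
  (hT : T.IsTree)
  (hN_tv : T.neighborSet tv = {s})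
  (hN_s : T.neighborSet s = {tv, a₀, b₀})
  (ha_tv : a₀ ≠ tv) (hb_tv : b₀ ≠ tv)
  (hab : a₀ ≠ b₀) (hnab : ¬ T.Adj a₀ b₀)
  {N : SimpleGraph {b : B // b ≠ tv ∧ b ≠ s}}
  (hNadj : ∀ x y, N.Adj x y ↔ x ≠ y ∧
    (T.Adj x.1 y.1 ∨ (x.1 = a₀ ∧ y.1 = b₀) ∨ (x.1 = b₀ ∧ y.1 = a₀)))

include hN_s in
lemma adj_s_a : T.Adj s a₀ := by
  rw [← SimpleGraph.mem_neighborSet, hN_s]; simp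

include hN_s in
lemma adj_s_b : T.Adj s b₀ := by
  rw [← SimpleGraph.mem_neighborSet, hN_s]; simp

include hN_tv in
lemma adj_tv_s : T.Adj tv s := by
  rw [← SimpleGraph.mem_neighborSet, hN_tv]; simp

include hN_tv in
lemma adj_tv_eq {x : B} (h : T.Adj tv x) : x = s := by
  rw [← SimpleGraph.mem_neighborSet, hN_tv] at h; exact h

include hN_s in
lemma adj_s_eq {x : B} (h : T.Adj s x) : x = tv ∨ x = a₀ ∨ x = b₀ := by
  rw [← SimpleGraph.mem_neighborSet, hN_s] at h; exact h

include hN_s in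
lemma a_ne_s : a₀ ≠ s := (adj_s_a hN_s).ne'

include hN_s in
lemma b_ne_s : b₀ ≠ s := (adj_s_b hN_s).ne'

include hN_tv hN_s ha_tv hab hNadj in
lemma newT_connected (hconn : T.Connected) : N.Connected := by
  have ha_s := a_ne_s hN_s
  set f := collapse tv s a₀ ha_tv ha_s with hf
  have hstep : ∀ p q, T.Adj p q → N.Reachable (f p) (f q) := by
    intro p q hpq
    by_cases hp : p = tv ∨ p = s <;> by_cases hq : q = tv ∨ q = s
    · rw [hf, collapse_mem hp, collapse_mem hq]
    · obtain ⟨hq1, hq2⟩ := not_or.mp hq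
      rcases hp with hp | hp
      · exact absurd (adj_tv_eq hN_tv (hp ▸ hpq)) hq2
      · rcases adj_s_eq hN_s (hp ▸ hpq) with h | h | h
        · exact absurd h hq1
        · subst h
          rw [hf, collapse_mem (Or.inr hp), collapse_fix hq1 hq2]
        · subst h
          rw [hf, collapse_mem (Or.inr hp), collapse_fix hq1 hq2]
          exact Adj.reachable ((hNadj _ _).mpr ⟨by simp [Subtype.ext_iff, hab],
            Or.inr (Or.inl ⟨rfl, rfl⟩)⟩)
    · obtain ⟨hp1, hp2⟩ := not_or.mp hp
      rcases hq with hq | hq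
      · exact absurd (adj_tv_eq hN_tv (hq ▸ hpq.symm)) hp2
      · rcases adj_s_eq hN_s (hq ▸ hpq.symm) with h | h | h
        · exact absurd h hp1
        · subst h
          rw [hf, collapse_fix hp1 hp2, collapse_mem (Or.inr hq)]
        · subst h
          rw [hf, collapse_fix hp1 hp2, collapse_mem (Or.inr hq)]
          exact Adj.reachable ((hNadj _ _).mpr ⟨by simp [Subtype.ext_iff, hab.symm],
            Or.inr (Or.inr ⟨rfl, rfl⟩)⟩)
    · obtain ⟨hp1, hp2⟩ := not_or.mp hp
      obtain ⟨hq1, hq2⟩ := not_or.mp hq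
      rw [hf, collapse_fix hp1 hp2, collapse_fix hq1 hq2]
      exact Adj.reachable ((hNadj _ _).mpr ⟨by simp [Subtype.ext_iff, hpq.ne], Or.inl hpq⟩)
  rw [connected_iff]
  refine ⟨fun x y => ?_, ⟨⟨a₀, ha_tv, ha_s⟩⟩⟩
  have h := hconn.preconnected x.1 y.1
  have := reach_transfer f h (fun a b ha _ => hstep a b ha)
  rwa [hf, collapse_fix x.2.1 x.2.2, collapse_fix y.2.1 y.2.2, Subtype.coe_eta,
    Subtype.coe_eta] at this


include hT hN_tv hN_s hab hnab hNadj in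
lemma newT_acyclic : N.IsAcyclic := by
  have hsa : T.Adj a₀ s := (adj_s_a hN_s).symm
  have hs_notin : ∀ (x y : {b : B // b ≠ tv ∧ b ≠ s}) (d : B), s(d, s) ≠ s(x.1, y.1) := by
    intro x y d h
    rw [Sym2.eq_iff] at h
    rcases h with ⟨-, h⟩ | ⟨-, h⟩
    · exact y.2.2 h.symm
    · exact x.2.2 h.symm
  have key : ∀ x y : {b : B // b ≠ tv ∧ b ≠ s}, x.1 = a₀ → y.1 = b₀ →
      ¬ (N.deleteEdges {s(x, y)}).Reachable x y := by
    intro x y hx hy hreach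
    have hyS : (T.deleteEdges {s(a₀, s)}).Reachable y.1 a₀ := by
      refine reach_closed (S := {z : {b : B // b ≠ tv ∧ b ≠ s} |
        (T.deleteEdges {s(a₀, s)}).Reachable z.1 a₀}) ?_ hreach ?_
      · intro a b hab' haS
        obtain ⟨hadjN, hne_e⟩ := SimpleGraph.deleteEdges_adj.mp hab'
        rw [Set.mem_singleton_iff] at hne_e
        rcases (hNadj a b).mp hadjN with ⟨hne', holdab | ⟨ha1, hb1⟩ | ⟨ha1, hb1⟩⟩
        · refine Reachable.trans (Adj.reachable ?_) haS
          refine SimpleGraph.deleteEdges_adj.mpr ⟨holdab.symm, ?_⟩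
          rw [Set.mem_singleton_iff, Sym2.eq_iff]
          push_neg
          exact ⟨fun _ => a.2.2, fun h => absurd h b.2.2⟩
        · exact absurd (sym2_subtype_eq (by rw [ha1, hb1, hx, hy])) hne_e
        · exact absurd (sym2_subtype_eq (by rw [ha1, hb1, hx, hy, Sym2.eq_swap])) hne_e
      · exact (hx ▸ Reachable.refl x.1 : (T.deleteEdges {s(a₀, s)}).Reachable x.1 a₀)
    have hs_reach : (T.deleteEdges {s(a₀, s)}).Reachable a₀ s := by
      refine Reachable.symm (Reachable.trans (Adj.reachable ?_) (hy ▸ hyS))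
      refine SimpleGraph.deleteEdges_adj.mpr ⟨(adj_s_b hN_s), ?_⟩
      rw [Set.mem_singleton_iff, Sym2.eq_iff]
      push_neg
      exact ⟨fun h => absurd h.symm (a_ne_s hN_s), fun _ h => hab h.symm⟩
    exact bridge_of_tree hT hsa hs_reach
  rw [isAcyclic_iff_forall_edge_isBridge]
  intro e he
  induction e with
  | h x y =>
    rw [SimpleGraph.mem_edgeSet] at he
    rw [isBridge_iff]
    refine fun hreach => ?_
    rcases (hNadj x y).mp he with ⟨hne, hold | ⟨hx, hy⟩ | ⟨hx, hy⟩⟩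
    · -- old edge
      have hyS : (T.deleteEdges {s(x.1, y.1)}).Reachable y.1 x.1 := by
        refine reach_closed (S := {z : {b : B // b ≠ tv ∧ b ≠ s} |
          (T.deleteEdges {s(x.1, y.1)}).Reachable z.1 x.1}) ?_ hreach (Reachable.refl _)
        intro a b hab' haS
        obtain ⟨hadjN, hne_e⟩ := SimpleGraph.deleteEdges_adj.mp hab'
        rw [Set.mem_singleton_iff] at hne_e
        rcases (hNadj a b).mp hadjN with ⟨hne', holdab | ⟨ha1, hb1⟩ | ⟨ha1, hb1⟩⟩
        · refine Reachable.trans (Adj.reachable ?_) haS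
          refine SimpleGraph.deleteEdges_adj.mpr ⟨holdab.symm, ?_⟩
          rw [Set.mem_singleton_iff]
          intro h
          exact hne_e (sym2_subtype_eq (Sym2.eq_swap.trans h))
        · -- a.1 = a₀, b.1 = b₀ : go through s
          refine Reachable.trans (Adj.reachable (SimpleGraph.deleteEdges_adj.mpr
            ⟨by rw [hb1]; exact (adj_s_b hN_s).symm, ?_⟩)) (Reachable.trans
            (Adj.reachable (SimpleGraph.deleteEdges_adj.mpr ⟨by rw [ha1]; exact adj_s_a hN_s, ?_⟩)) haS)
          · rw [Set.mem_singleton_iff, hb1]; exact hs_notin x y b₀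
          · rw [Set.mem_singleton_iff, Sym2.eq_swap, ha1]; exact hs_notin x y a₀
        · refine Reachable.trans (Adj.reachable (SimpleGraph.deleteEdges_adj.mpr
            ⟨by rw [hb1]; exact (adj_s_a hN_s).symm, ?_⟩)) (Reachable.trans
            (Adj.reachable (SimpleGraph.deleteEdges_adj.mpr ⟨by rw [ha1]; exact adj_s_b hN_s, ?_⟩)) haS)
          · rw [Set.mem_singleton_iff, hb1]; exact hs_notin x y a₀
          · rw [Set.mem_singleton_iff, Sym2.eq_swap, ha1]; exact hs_notin x y b₀
      exact bridge_of_tree hT hold hyS.symm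
    · exact key x y hx hy hreach
    · refine key y x hy hx ?_
      rw [Sym2.eq_swap]
      exact hreach.symm

include hN_tv hN_s ha_tv hb_tv hab hnab hNadj in
lemma newT_degree [Finite B] (z : {b : B // b ≠ tv ∧ b ≠ s}) :
    (N.neighborSet z).ncard = (T.neighborSet z.1).ncard := by
  have hval : ∀ S : Set {b : B // b ≠ tv ∧ b ≠ s}, S.ncard = (Subtype.val '' S).ncard :=
    fun S => (Set.ncard_image_of_injective S Subtype.val_injective).symm
  by_cases hza : z.1 = a₀
  · have himg : Subtype.val '' (N.neighborSet z) = insert b₀ (T.neighborSet a₀ \ {s}) := by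
      ext b
      simp only [Set.mem_image, SimpleGraph.mem_neighborSet, Set.mem_insert_iff, Set.mem_diff,
        Set.mem_singleton_iff]
      constructor
      · rintro ⟨w, hw, rfl⟩
        rcases (hNadj z w).mp hw with ⟨hne, hold | ⟨h1, h2⟩ | ⟨h1, h2⟩⟩
        · right; exact ⟨hza ▸ hold, w.2.2⟩
        · left; exact h2
        · exact absurd (hza ▸ h1 : a₀ = b₀) hab
      · rintro (rfl | ⟨hadj, hbs⟩)
        · refine ⟨⟨b, hb_tv, b_ne_s hN_s⟩, ?_, rfl⟩
          refine (hNadj _ _).mpr ⟨?_, Or.inr (Or.inl ⟨hza, rfl⟩)⟩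
          intro h
          exact hab (hza ▸ congrArg Subtype.val h)
        · have hbtv : b ≠ tv := by
            rintro rfl
            exact a_ne_s hN_s (adj_tv_eq hN_tv hadj.symm)
          refine ⟨⟨b, hbtv, hbs⟩, ?_, rfl⟩
          refine (hNadj _ _).mpr ⟨?_, Or.inl (hza ▸ hadj)⟩
          intro h
          exact (hza ▸ hadj : T.Adj z.1 b).ne (congrArg Subtype.val h)
    have hins : T.neighborSet a₀ = insert s (T.neighborSet a₀ \ {s}) := by
      rw [Set.insert_diff_singleton]
      exact (Set.insert_eq_self.mpr ((adj_s_a hN_s).symm : T.Adj a₀ s)).symm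
    rw [hval, himg, hza]
    conv_rhs => rw [hins]
    rw [Set.ncard_insert_of_notMem (fun h => hnab h.1),
      Set.ncard_insert_of_notMem (fun h => h.2 rfl)]
  · by_cases hzb : z.1 = b₀
    · have himg : Subtype.val '' (N.neighborSet z) = insert a₀ (T.neighborSet b₀ \ {s}) := by
        ext b
        simp only [Set.mem_image, SimpleGraph.mem_neighborSet, Set.mem_insert_iff, Set.mem_diff,
          Set.mem_singleton_iff]
        constructor
        · rintro ⟨w, hw, rfl⟩
          rcases (hNadj z w).mp hw with ⟨hne, hold | ⟨h1, h2⟩ | ⟨h1, h2⟩⟩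
          · right; exact ⟨hzb ▸ hold, w.2.2⟩
          · exact absurd (hzb ▸ h1 : b₀ = a₀) hab.symm
          · left; exact h2
        · rintro (rfl | ⟨hadj, hbs⟩)
          · refine ⟨⟨b, ha_tv, a_ne_s hN_s⟩, ?_, rfl⟩
            refine (hNadj _ _).mpr ⟨?_, Or.inr (Or.inr ⟨hzb, rfl⟩)⟩
            intro h
            exact hab (hzb ▸ congrArg Subtype.val h).symm
          · have hbtv : b ≠ tv := by
              rintro rfl
              exact b_ne_s hN_s (adj_tv_eq hN_tv hadj.symm)
            refine ⟨⟨b, hbtv, hbs⟩, ?_, rfl⟩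
            refine (hNadj _ _).mpr ⟨?_, Or.inl (hzb ▸ hadj)⟩
            intro h
            exact (hzb ▸ hadj : T.Adj z.1 b).ne (congrArg Subtype.val h)
      have hins : T.neighborSet b₀ = insert s (T.neighborSet b₀ \ {s}) := by
        rw [Set.insert_diff_singleton]
        exact (Set.insert_eq_self.mpr ((adj_s_b hN_s).symm : T.Adj b₀ s)).symm
      rw [hval, himg, hzb]
      conv_rhs => rw [hins]
      rw [Set.ncard_insert_of_notMem (fun h => hnab h.1.symm),
        Set.ncard_insert_of_notMem (fun h => h.2 rfl)]
    · have himg : Subtype.val '' (N.neighborSet z) = T.neighborSet z.1 := by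
        ext b
        simp only [Set.mem_image, SimpleGraph.mem_neighborSet]
        constructor
        · rintro ⟨w, hw, rfl⟩
          rcases (hNadj z w).mp hw with ⟨hne, hold | ⟨h1, h2⟩ | ⟨h1, h2⟩⟩
          · exact hold
          · exact absurd h1 hza
          · exact absurd h1 hzb
        · intro hadj
          have hbtv : b ≠ tv := by
            rintro rfl
            exact z.2.2 (adj_tv_eq hN_tv hadj.symm)
          have hbs : b ≠ s := by
            rintro rfl
            rcases adj_s_eq hN_s hadj.symm with h | h | h
            · exact z.2.1 h
            · exact hza h
            · exact hzb h
          refine ⟨⟨b, hbtv, hbs⟩, ?_, rfl⟩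
          exact (hNadj _ _).mpr ⟨fun h => hadj.ne (congrArg Subtype.val h), Or.inl hadj⟩
      rw [hval, himg]

lemma sym2_val_eq {P : B → Prop} {a b x y : {b : B // P b}}
    (h : s(a, b) = s(x, y)) : s(a.1, b.1) = s(x.1, y.1) := by
  rw [Sym2.eq_iff] at h ⊢
  rcases h with ⟨h1, h2⟩ | ⟨h1, h2⟩
  · exact Or.inl ⟨congrArg Subtype.val h1, congrArg Subtype.val h2⟩
  · exact Or.inr ⟨congrArg Subtype.val h1, congrArg Subtype.val h2⟩

lemma snotin (x y : {b : B // b ≠ tv ∧ b ≠ s}) (d : B) : s(d, s) ≠ s(x.1, y.1) := by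
  intro h
  rw [Sym2.eq_iff] at h
  rcases h with ⟨-, h⟩ | ⟨-, h⟩
  · exact y.2.2 h.symm
  · exact x.2.2 h.symm

include hN_tv hN_s ha_tv hb_tv hab hnab hNadj in
lemma side_old (x y : {b : B // b ≠ tv ∧ b ≠ s}) (hxy : T.Adj x.1 y.1)
    (z : B) (hz1 : z ≠ tv) (hz2 : z ≠ s) :
    (N.deleteEdges {s(x, y)}).Reachable ⟨z, hz1, hz2⟩ x ↔
      (T.deleteEdges {s(x.1, y.1)}).Reachable z x.1 := by
  constructor
  · intro h
    exact reach_transfer Subtype.val h (fun a b hadj _ => by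
      obtain ⟨hadjN, hne_e⟩ := SimpleGraph.deleteEdges_adj.mp hadj
      rw [Set.mem_singleton_iff] at hne_e
      rcases (hNadj a b).mp hadjN with ⟨hne', holdab | ⟨ha1, hb1⟩ | ⟨ha1, hb1⟩⟩
      · exact (SimpleGraph.deleteEdges_adj.mpr ⟨holdab, by
          rw [Set.mem_singleton_iff]; exact fun hh => hne_e (sym2_subtype_eq hh)⟩).reachable
      · refine (SimpleGraph.deleteEdges_adj.mpr ⟨by rw [ha1]; exact (adj_s_a hN_s).symm, ?_⟩).reachable.trans
          (SimpleGraph.deleteEdges_adj.mpr ⟨by rw [hb1]; exact adj_s_b hN_s, ?_⟩).reachable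
        · rw [Set.mem_singleton_iff, ha1]; exact snotin x y a₀
        · rw [Set.mem_singleton_iff, Sym2.eq_swap, hb1]; exact snotin x y b₀
      · refine (SimpleGraph.deleteEdges_adj.mpr ⟨by rw [ha1]; exact (adj_s_b hN_s).symm, ?_⟩).reachable.trans
          (SimpleGraph.deleteEdges_adj.mpr ⟨by rw [hb1]; exact adj_s_a hN_s, ?_⟩).reachable
        · rw [Set.mem_singleton_iff, ha1]; exact snotin x y b₀
        · rw [Set.mem_singleton_iff, Sym2.eq_swap, hb1]; exact snotin x y a₀)
  · intro h
    have ha_s := a_ne_s hN_s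
    set f := collapse tv s a₀ ha_tv ha_s with hf
    have hstep : ∀ a b, (T.deleteEdges {s(x.1, y.1)}).Adj a b →
        (N.deleteEdges {s(x, y)}).Reachable (f a) (f b) := by
      intro a b hadj
      obtain ⟨hadjT, hne_e⟩ := SimpleGraph.deleteEdges_adj.mp hadj
      rw [Set.mem_singleton_iff] at hne_e
      have hnewok : s(⟨a₀, ha_tv, ha_s⟩, (⟨b₀, hb_tv, b_ne_s hN_s⟩ :
          {b : B // b ≠ tv ∧ b ≠ s})) ∉ ({s(x, y)} : Set _) := by
        rw [Set.mem_singleton_iff]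
        intro hh
        have := sym2_val_eq hh
        rw [Sym2.eq_iff] at this
        rcases this with ⟨h1, h2⟩ | ⟨h1, h2⟩
        · refine hnab ?_; rw [show a₀ = x.1 from h1, show b₀ = y.1 from h2]; exact hxy
        · refine hnab ?_; rw [show a₀ = y.1 from h1, show b₀ = x.1 from h2]; exact hxy.symm
      have hnewadj : N.Adj ⟨a₀, ha_tv, ha_s⟩ ⟨b₀, hb_tv, b_ne_s hN_s⟩ :=
        (hNadj _ _).mpr ⟨by simp [Subtype.ext_iff]; exact hab, Or.inr (Or.inl ⟨rfl, rfl⟩)⟩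
      by_cases hp : a = tv ∨ a = s <;> by_cases hq : b = tv ∨ b = s
      · rw [hf, collapse_mem hp, collapse_mem hq]
      · obtain ⟨hq1, hq2⟩ := not_or.mp hq
        rcases hp with hp | hp
        · exact absurd (adj_tv_eq hN_tv (hp ▸ hadjT)) hq2
        · rcases adj_s_eq hN_s (hp ▸ hadjT) with hh | hh | hh
          · exact absurd hh hq1
          · subst hh; rw [hf, collapse_mem (Or.inr hp), collapse_fix hq1 hq2]
          · subst hh; rw [hf, collapse_mem (Or.inr hp), collapse_fix hq1 hq2]
            exact (SimpleGraph.deleteEdges_adj.mpr ⟨hnewadj, hnewok⟩).reachable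
      · obtain ⟨hp1, hp2⟩ := not_or.mp hp
        rcases hq with hq | hq
        · exact absurd (adj_tv_eq hN_tv (hq ▸ hadjT.symm)) hp2
        · rcases adj_s_eq hN_s (hq ▸ hadjT.symm) with hh | hh | hh
          · exact absurd hh hp1
          · subst hh; rw [hf, collapse_fix hp1 hp2, collapse_mem (Or.inr hq)]
          · subst hh; rw [hf, collapse_fix hp1 hp2, collapse_mem (Or.inr hq)]
            exact (SimpleGraph.deleteEdges_adj.mpr ⟨hnewadj, hnewok⟩).reachable.symm
      · obtain ⟨hp1, hp2⟩ := not_or.mp hp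
        obtain ⟨hq1, hq2⟩ := not_or.mp hq
        rw [hf, collapse_fix hp1 hp2, collapse_fix hq1 hq2]
        refine (SimpleGraph.deleteEdges_adj.mpr ⟨(hNadj _ _).mpr
          ⟨by simp [Subtype.ext_iff]; exact hadjT.ne, Or.inl hadjT⟩, ?_⟩).reachable
        rw [Set.mem_singleton_iff]
        exact fun hh => hne_e (sym2_val_eq hh)
    have := reach_transfer f h (fun a b ha _ => hstep a b ha)
    rwa [hf, collapse_fix hz1 hz2, collapse_fix x.2.1 x.2.2, Subtype.coe_eta] at this

include hT hN_tv hN_s ha_tv hab hnab hNadj in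
lemma side_new (x y : {b : B // b ≠ tv ∧ b ≠ s}) (hx : x.1 = a₀) (hy : y.1 = b₀)
    (z : B) (hz1 : z ≠ tv) (hz2 : z ≠ s) :
    (N.deleteEdges {s(x, y)}).Reachable ⟨z, hz1, hz2⟩ x ↔
      (T.deleteEdges {s(a₀, s)}).Reachable z a₀ := by
  have ha_s := a_ne_s hN_s
  have hsa : T.Adj a₀ s := (adj_s_a hN_s).symm
  have hbridge : ¬ (T.deleteEdges {s(a₀, s)}).Reachable a₀ s := bridge_of_tree hT hsa
  constructor
  · intro h
    have h2 : (T.deleteEdges {s(a₀, s)}).Reachable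
        ((⟨z, hz1, hz2⟩ : {b : B // b ≠ tv ∧ b ≠ s}) : B) (x : B) :=
      reach_transfer Subtype.val h (fun a b hadj _ => by
        obtain ⟨hadjN, hne_e⟩ := SimpleGraph.deleteEdges_adj.mp hadj
        rw [Set.mem_singleton_iff] at hne_e
        rcases (hNadj a b).mp hadjN with ⟨hne', holdab | ⟨ha1, hb1⟩ | ⟨ha1, hb1⟩⟩
        · refine (SimpleGraph.deleteEdges_adj.mpr ⟨holdab, ?_⟩).reachable
          rw [Set.mem_singleton_iff, Sym2.eq_iff]
          push_neg
          exact ⟨fun _ => b.2.2, fun h => absurd h a.2.2⟩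
        · exact absurd (sym2_subtype_eq (by rw [ha1, hb1, hx, hy])) hne_e
        · exact absurd (sym2_subtype_eq (by rw [ha1, hb1, hx, hy, Sym2.eq_swap])) hne_e)
    rw [hx] at h2
    exact h2
  · intro h
    set f := collapse tv s a₀ ha_tv ha_s with hf
    have hstep : ∀ a b, (T.deleteEdges {s(a₀, s)}).Adj a b →
        (T.deleteEdges {s(a₀, s)}).Reachable b a₀ →
        (N.deleteEdges {s(x, y)}).Reachable (f a) (f b) := by
      intro a b hadj hbreach
      obtain ⟨hadjT, hne_e⟩ := SimpleGraph.deleteEdges_adj.mp hadj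
      rw [Set.mem_singleton_iff] at hne_e
      have hbs : b ≠ s := by
        rintro rfl
        exact hbridge hbreach.symm
      have hbtv : b ≠ tv := by
        rintro rfl
        refine hbridge (Reachable.symm (Reachable.trans (Adj.reachable
          (SimpleGraph.deleteEdges_adj.mpr ⟨(adj_tv_s hN_tv).symm, ?_⟩)) hbreach))
        rw [Set.mem_singleton_iff, Sym2.eq_iff]
        push_neg
        exact ⟨fun h => absurd h.symm ha_s, fun _ h => ha_tv h.symm⟩
      have has : a ≠ s := by
        rintro rfl
        rcases adj_s_eq hN_s hadjT with hh | hh | hh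
        · exact hbtv hh
        · subst hh
          exact hne_e (Sym2.eq_swap)
        · subst hh
          refine hbridge (Reachable.symm (Reachable.trans (Adj.reachable
            (SimpleGraph.deleteEdges_adj.mpr ⟨adj_s_b hN_s, ?_⟩)) hbreach))
          rw [Set.mem_singleton_iff, Sym2.eq_iff]
          push_neg
          exact ⟨fun h => absurd h.symm ha_s, fun _ h => hab h.symm⟩
      have hatv : a ≠ tv := by
        rintro rfl
        exact hbs (adj_tv_eq hN_tv hadjT)
      rw [hf, collapse_fix hatv has, collapse_fix hbtv hbs]
      refine (SimpleGraph.deleteEdges_adj.mpr ⟨(hNadj _ _).mpr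
        ⟨by simp [Subtype.ext_iff]; exact hadjT.ne, Or.inl hadjT⟩, ?_⟩).reachable
      rw [Set.mem_singleton_iff]
      intro hh
      have := sym2_val_eq hh
      rw [Sym2.eq_iff] at this
      rcases this with ⟨h1, h2⟩ | ⟨h1, h2⟩
      · refine hnab ?_
        rw [show (a : B) = a₀ from hx ▸ h1] at hadjT
        rw [show (b : B) = b₀ from hy ▸ h2] at hadjT
        exact hadjT
      · refine hnab ?_
        rw [show (a : B) = b₀ from hy ▸ h1] at hadjT
        rw [show (b : B) = a₀ from hx ▸ h2] at hadjT
        exact hadjT.symm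
    have := reach_transfer f h hstep
    rwa [hf, collapse_fix hz1 hz2, collapse_fix ha_tv ha_s,
      show (⟨a₀, ha_tv, ha_s⟩ : {b : B // b ≠ tv ∧ b ≠ s}) = x from Subtype.ext hx.symm] at this

end Construction


lemma mmVal_contract_le {V : Type} [Finite V] (G : SimpleGraph V) (u v : V)
    (huv : G.Adj u v) (A : Set V) :
    mmVal (contractEdge G u v) (Subtype.val ⁻¹' A) ≤ mmVal G A := by
  classical
  have : Fintype V := Fintype.ofFinite V
  set V' := {x : V // x ≠ v} with hV'
  set G' := contractEdge G u v with hG'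
  unfold mmVal
  set A' : Set V' := Subtype.val ⁻¹' A with hA'
  have hbddS : BddAbove {n | ∃ M : Finset (V × V),
      (∀ p ∈ M, p.1 ∈ A ∧ p.2 ∉ A ∧ G.Adj p.1 p.2) ∧
      (∀ p ∈ M, ∀ q ∈ M, p ≠ q → p.1 ≠ q.1 ∧ p.2 ≠ q.2) ∧ M.card = n} :=
    ⟨Fintype.card (V × V), by rintro n ⟨M, -, -, rfl⟩; exact Finset.card_le_univ M⟩
  have hbddS' : BddAbove {n | ∃ M : Finset (V' × V'),
      (∀ p ∈ M, p.1 ∈ A' ∧ p.2 ∉ A' ∧ G'.Adj p.1 p.2) ∧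
      (∀ p ∈ M, ∀ q ∈ M, p ≠ q → p.1 ≠ q.1 ∧ p.2 ≠ q.2) ∧ M.card = n} :=
    ⟨Fintype.card (V' × V'), by rintro n ⟨M, -, -, rfl⟩; exact Finset.card_le_univ M⟩
  have hne' : {n | ∃ M : Finset (V' × V'),
      (∀ p ∈ M, p.1 ∈ A' ∧ p.2 ∉ A' ∧ G'.Adj p.1 p.2) ∧
      (∀ p ∈ M, ∀ q ∈ M, p ≠ q → p.1 ≠ q.1 ∧ p.2 ≠ q.2) ∧ M.card = n}.Nonempty :=
    ⟨0, ∅, by simp, by simp, by simp⟩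
  obtain ⟨M', h1, h2, hcard⟩ := Nat.sSup_mem hne' hbddS'
  rw [← hcard]
  -- now lift M' to a matching for G, A
  set F : V' × V' → V × V := fun p =>
    if G.Adj p.1.1 p.2.1 then (p.1.1, p.2.1)
    else if p.1.1 = u then (if v ∈ A then (v, p.2.1) else (u, v))
    else (if v ∈ A then (v, u) else (p.1.1, v)) with hF
  -- case analysis on adjacency in G'
  have hcase : ∀ p ∈ M', G.Adj p.1.1 p.2.1 ∨
      (¬G.Adj p.1.1 p.2.1 ∧ p.1.1 = u ∧ G.Adj v p.2.1) ∨
      (¬G.Adj p.1.1 p.2.1 ∧ p.2.1 = u ∧ G.Adj v p.1.1) := by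
    intro p hp
    obtain ⟨-, -, hadj⟩ := h1 p hp
    rw [hG', contractEdge, fromRel_adj] at hadj
    obtain ⟨hne, hr⟩ := hadj
    by_cases hA : G.Adj p.1.1 p.2.1
    · exact Or.inl hA
    · right
      rcases hr with (h | h | h) | (h | h | h)
      · exact absurd h hA
      · exact Or.inl ⟨hA, h⟩
      · exact Or.inr ⟨hA, h⟩
      · exact absurd h.symm hA
      · exact Or.inr ⟨hA, h⟩
      · exact Or.inl ⟨hA, h⟩
  have hcross : ∀ p ∈ M', (F p).1 ∈ A ∧ (F p).2 ∉ A ∧ G.Adj (F p).1 (F p).2 := by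
    intro p hp
    obtain ⟨hp1, hp2, -⟩ := h1 p hp
    rcases hcase p hp with h | ⟨hna, h1u, hv2⟩ | ⟨hna, h2u, hv1⟩
    · simp only [hF, if_pos h]
      exact ⟨hp1, hp2, h⟩
    · simp only [hF, if_neg hna, if_pos h1u]
      by_cases hvA : v ∈ A
      · simp only [if_pos hvA]; exact ⟨hvA, hp2, hv2⟩
      · simp only [if_neg hvA]; exact ⟨h1u ▸ hp1, hvA, huv⟩
    · have h1nu : p.1.1 ≠ u := by
        intro h
        exact hp2 (show p.2 ∈ A' from by
          have : p.1 = p.2 := Subtype.ext (h.trans h2u.symm)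
          exact this ▸ hp1)
      simp only [hF, if_neg hna, if_neg h1nu]
      by_cases hvA : v ∈ A
      · simp only [if_pos hvA]; exact ⟨hvA, h2u ▸ hp2, huv.symm⟩
      · simp only [if_neg hvA]; exact ⟨hp1, hvA, hv1.symm⟩
  have hfst : ∀ p ∈ M', (F p).1 = p.1.1 ∨
      ((F p).1 = v ∧ v ∈ A ∧ (p.1.1 = u ∨ p.2.1 = u)) := by
    intro p hp
    rcases hcase p hp with h | ⟨hna, h1u, hv2⟩ | ⟨hna, h2u, hv1⟩
    · left; simp [hF, if_pos h]
    · by_cases hvA : v ∈ A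
      · right; simp only [hF, if_neg hna, if_pos h1u, if_pos hvA]
        exact ⟨trivial, hvA, Or.inl h1u⟩
      · left; simp only [hF, if_neg hna, if_pos h1u, if_neg hvA]; exact h1u.symm
    · have h1nu : p.1.1 ≠ u := by
        intro h
        obtain ⟨hp1, hp2, -⟩ := h1 p hp
        exact hp2 (show p.2 ∈ A' from (Subtype.ext (h.trans h2u.symm) : p.1 = p.2) ▸ hp1)
      by_cases hvA : v ∈ A
      · right; simp only [hF, if_neg hna, if_neg h1nu, if_pos hvA]
        exact ⟨trivial, hvA, Or.inr h2u⟩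
      · left; simp [hF, if_neg hna, if_neg h1nu, if_neg hvA]
  have hsnd : ∀ p ∈ M', (F p).2 = p.2.1 ∨
      ((F p).2 = v ∧ v ∉ A ∧ (p.1.1 = u ∨ p.2.1 = u)) := by
    intro p hp
    rcases hcase p hp with h | ⟨hna, h1u, hv2⟩ | ⟨hna, h2u, hv1⟩
    · left; simp [hF, if_pos h]
    · by_cases hvA : v ∈ A
      · left; simp [hF, if_neg hna, if_pos h1u, if_pos hvA]
      · right; simp only [hF, if_neg hna, if_pos h1u, if_neg hvA]
        exact ⟨trivial, hvA, Or.inl h1u⟩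
    · have h1nu : p.1.1 ≠ u := by
        intro h
        obtain ⟨hp1, hp2, -⟩ := h1 p hp
        exact hp2 (show p.2 ∈ A' from (Subtype.ext (h.trans h2u.symm) : p.1 = p.2) ▸ hp1)
      by_cases hvA : v ∈ A
      · left; simp [hF, if_neg hna, if_neg h1nu, if_pos hvA, h2u]
      · right; simp only [hF, if_neg hna, if_neg h1nu, if_neg hvA]
        exact ⟨trivial, hvA, Or.inr h2u⟩
  have htouch : ∀ p ∈ M', ∀ q ∈ M', p ≠ q →
      (p.1.1 = u ∨ p.2.1 = u) → (q.1.1 = u ∨ q.2.1 = u) → False := by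
    intro p hp q hq hne hpu hqu
    obtain ⟨hp1, hp2, -⟩ := h1 p hp
    obtain ⟨hq1, hq2, -⟩ := h1 q hq
    obtain ⟨hd1, hd2⟩ := h2 p hp q hq hne
    rcases hpu with hpu | hpu <;> rcases hqu with hqu | hqu
    · exact hd1 (Subtype.ext (hpu.trans hqu.symm))
    · exact hq2 (show q.2 ∈ A' from by rw [hA', Set.mem_preimage, hqu, ← hpu]; exact hp1)
    · exact hp2 (show p.2 ∈ A' from by rw [hA', Set.mem_preimage, hpu, ← hqu]; exact hq1)
    · exact hd2 (Subtype.ext (hpu.trans hqu.symm))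
  have hdist : ∀ p ∈ M', ∀ q ∈ M', p ≠ q → (F p).1 ≠ (F q).1 ∧ (F p).2 ≠ (F q).2 := by
    intro p hp q hq hne
    obtain ⟨hd1, hd2⟩ := h2 p hp q hq hne
    constructor
    · rcases hfst p hp with h | ⟨h, hvA, hu⟩ <;> rcases hfst q hq with h' | ⟨h', hvA', hu'⟩
      · rw [h, h']; exact fun he => hd1 (Subtype.ext he)
      · rw [h, h']; exact p.1.2
      · rw [h, h']; exact fun he => q.1.2 he.symm
      · exact absurd (htouch p hp q hq hne hu hu') id
    · rcases hsnd p hp with h | ⟨h, hvA, hu⟩ <;> rcases hsnd q hq with h' | ⟨h', hvA', hu'⟩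
      · rw [h, h']; exact fun he => hd2 (Subtype.ext he)
      · rw [h, h']; exact p.2.2
      · rw [h, h']; exact fun he => q.2.2 he.symm
      · exact absurd (htouch p hp q hq hne hu hu') id
  have hinj : Set.InjOn F M' := by
    intro p hp q hq he
    by_contra hne
    exact (hdist p hp q hq hne).1 (by rw [he])
  apply le_csSup hbddS
  refine ⟨M'.image F, ?_, ?_, ?_⟩
  · intro r hr
    obtain ⟨p, hp, rfl⟩ := Finset.mem_image.mp hr
    exact hcross p hp
  · intro r hr r' hr' hrr
    obtain ⟨p, hp, rfl⟩ := Finset.mem_image.mp hr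
    obtain ⟨q, hq, rfl⟩ := Finset.mem_image.mp hr'
    exact hdist p hp q hq (fun h => hrr (by rw [h]))
  · exact Finset.card_image_of_injOn hinj

set_option maxHeartbeats 1000000 in
lemma exists_decomp_contract {V : Type} [Finite V] (G : SimpleGraph V) (u v : V)
    (huv : G.Adj u v) (hV : 3 ≤ Nat.card V) (k : ℕ) (D : BranchDecomp G)
    (hw : D.widthLE k) : ∃ D' : BranchDecomp (contractEdge G u v), D'.widthLE k := by
  classical
  have finB := D.finB
  set T := D.T with hT_def
  have hT : T.IsTree := D.isTree
  set tv : D.B := (D.L.symm v).1 with htv_def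
  have htv : (T.neighborSet tv).ncard = 1 := (D.L.symm v).2
  obtain ⟨s0, hN_tv⟩ := Set.ncard_eq_one.mp htv
  have hadj_tv_s : T.Adj tv s0 := by rw [← SimpleGraph.mem_neighborSet, hN_tv]; simp
  -- s0 has degree 3
  have hs3 : (T.neighborSet s0).ncard = 3 := by
    rcases D.subcubic s0 with h1 | h3
    · exfalso
      obtain ⟨w, hw1⟩ := Set.ncard_eq_one.mp h1
      have hwtv : tv ∈ T.neighborSet s0 := hadj_tv_s.symm
      rw [hw1, Set.mem_singleton_iff] at hwtv
      subst hwtv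
      have hall : ∀ b : D.B, b = tv ∨ b = s0 := by
        intro b
        refine reach_closed (S := {b : D.B | b = tv ∨ b = s0}) ?_
          (hT.isConnected.preconnected tv b) (Or.inl rfl)
        intro a c hac ha
        rcases ha with rfl | rfl
        · right
          have := hac
          rw [← SimpleGraph.mem_neighborSet, hN_tv, Set.mem_singleton_iff] at this
          exact this
        · left
          have := hac
          rw [← SimpleGraph.mem_neighborSet, hw1, Set.mem_singleton_iff] at this
          exact this
      have hinj : Function.Injective (fun b : D.B => decide (b = tv)) := by
        intro a b hab
        rcases hall a with rfl | rfl <;> rcases hall b with rfl | rfl <;> simp_all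
      have hcard2 : Nat.card D.B ≤ 2 := by
        have := Nat.card_le_card_of_injective _ hinj
        simpa [Nat.card_eq_fintype_card] using this
      have hle : Nat.card V ≤ Nat.card D.B := by
        have h1' : Nat.card V = Nat.card {b : D.B // (T.neighborSet b).ncard = 1} :=
          (Nat.card_congr D.L).symm
        rw [h1']
        exact Nat.card_le_card_of_injective _ Subtype.val_injective
      omega
    · exact h3
  obtain ⟨a₁, b₁, c₁, hab1, hac1, hbc1, hN_s1⟩ := Set.ncard_eq_three.mp hs3
  have htv_mem : tv = a₁ ∨ tv = b₁ ∨ tv = c₁ := by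
    have : tv ∈ ({a₁, b₁, c₁} : Set D.B) := by rw [← hN_s1]; exact hadj_tv_s.symm
    simpa [Set.mem_insert_iff, Set.mem_singleton_iff] using this
  obtain ⟨a₀, b₀, hN_s, ha_tv, hb_tv, hab⟩ :
      ∃ a₀ b₀, T.neighborSet s0 = {tv, a₀, b₀} ∧ a₀ ≠ tv ∧ b₀ ≠ tv ∧ a₀ ≠ b₀ := by
    rcases htv_mem with h | h | h
    · exact ⟨b₁, c₁, by rw [hN_s1, h], fun hh => hab1 (h ▸ hh).symm,
        fun hh => hac1 (h ▸ hh).symm, hbc1⟩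
    · refine ⟨a₁, c₁, ?_, fun hh => hab1 (h ▸ hh), fun hh => hbc1 (h ▸ hh).symm, hac1⟩
      rw [hN_s1, h, Set.insert_comm]
    · refine ⟨a₁, b₁, ?_, fun hh => hac1 (h ▸ hh), fun hh => hbc1 (h ▸ hh), hab1⟩
      rw [hN_s1, h, Set.pair_comm b₁ c₁, Set.insert_comm a₁ c₁]
  have hsa : T.Adj s0 a₀ := by rw [← SimpleGraph.mem_neighborSet, hN_s]; simp
  have hsb : T.Adj s0 b₀ := by rw [← SimpleGraph.mem_neighborSet, hN_s]; simp
  have ha_s : a₀ ≠ s0 := hsa.ne'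
  have hb_s : b₀ ≠ s0 := hsb.ne'
  have hnab : ¬ T.Adj a₀ b₀ := by
    intro h
    refine bridge_of_tree hT h ?_
    refine Reachable.trans (Adj.reachable (SimpleGraph.deleteEdges_adj.mpr ⟨hsa, ?_⟩)).symm
      (Adj.reachable (SimpleGraph.deleteEdges_adj.mpr ⟨hsb, ?_⟩))
    · rw [Set.mem_singleton_iff, Sym2.eq_iff]
      push_neg
      exact ⟨fun _ => hab, fun h' => absurd h' hb_s.symm⟩
    · rw [Set.mem_singleton_iff, Sym2.eq_iff]
      push_neg
      exact ⟨fun h' => absurd h' ha_s.symm, fun _ h' => hab h'.symm⟩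
  -- the new tree
  set N : SimpleGraph {b : D.B // b ≠ tv ∧ b ≠ s0} :=
    SimpleGraph.fromRel (fun x y => T.Adj x.1 y.1 ∨ (x.1 = a₀ ∧ y.1 = b₀)) with hN_def
  have hNadj : ∀ x y : {b : D.B // b ≠ tv ∧ b ≠ s0}, N.Adj x y ↔ x ≠ y ∧
      (T.Adj x.1 y.1 ∨ (x.1 = a₀ ∧ y.1 = b₀) ∨ (x.1 = b₀ ∧ y.1 = a₀)) := by
    intro x y
    rw [hN_def, SimpleGraph.fromRel_adj]
    constructor
    · rintro ⟨h1, (h2 | h2) | (h2 | h2)⟩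
      · exact ⟨h1, Or.inl h2⟩
      · exact ⟨h1, Or.inr (Or.inl h2)⟩
      · exact ⟨h1, Or.inl h2.symm⟩
      · exact ⟨h1, Or.inr (Or.inr ⟨h2.2, h2.1⟩)⟩
    · rintro ⟨h1, h2 | h2 | h2⟩
      · exact ⟨h1, Or.inl (Or.inl h2)⟩
      · exact ⟨h1, Or.inl (Or.inr h2)⟩
      · exact ⟨h1, Or.inr (Or.inr ⟨h2.2, h2.1⟩)⟩
  have hconn : N.Connected :=
    newT_connected hN_tv hN_s ha_tv hab hNadj hT.isConnected
  have hacyc : N.IsAcyclic :=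
    newT_acyclic hT hN_tv hN_s hab hnab hNadj
  have hdeg : ∀ z : {b : D.B // b ≠ tv ∧ b ≠ s0},
      (N.neighborSet z).ncard = (T.neighborSet z.1).ncard :=
    newT_degree hN_tv hN_s ha_tv hb_tv hab hnab hNadj
  have hsubc : ∀ z : {b : D.B // b ≠ tv ∧ b ≠ s0},
      (N.neighborSet z).ncard = 1 ∨ (N.neighborSet z).ncard = 3 := by
    intro z
    rw [hdeg z]
    exact D.subcubic z.1
  -- leaf equiv
  have pfT : ∀ z : {z : {b : D.B // b ≠ tv ∧ b ≠ s0} // (N.neighborSet z).ncard = 1},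
      (T.neighborSet z.1.1).ncard = 1 := fun z => (hdeg z.1).symm.trans z.2
  have pfv : ∀ z : {z : {b : D.B // b ≠ tv ∧ b ≠ s0} // (N.neighborSet z).ncard = 1},
      D.L ⟨z.1.1, pfT z⟩ ≠ v := by
    intro z h
    have : (⟨z.1.1, pfT z⟩ : {b : D.B // (T.neighborSet b).ncard = 1}) = D.L.symm v :=
      (Equiv.apply_eq_iff_eq_symm_apply D.L).mp h
    exact z.1.2.1 (congrArg Subtype.val this)
  have pf1 : ∀ x : {x : V // x ≠ v}, (D.L.symm x.1).1 ≠ tv := by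
    intro x h
    refine x.2 ?_
    have h2 : D.L.symm x.1 = D.L.symm v := Subtype.ext h
    have h3 := congrArg D.L h2
    rwa [Equiv.apply_symm_apply, Equiv.apply_symm_apply] at h3
  have pf2 : ∀ x : {x : V // x ≠ v}, (D.L.symm x.1).1 ≠ s0 := by
    intro x h
    have := (D.L.symm x.1).2
    rw [h, hs3] at this
    omega
  have pf3 : ∀ x : {x : V // x ≠ v},
      (N.neighborSet ⟨(D.L.symm x.1).1, pf1 x, pf2 x⟩).ncard = 1 :=
    fun x => (hdeg _).trans (D.L.symm x.1).2
  have hwidth : ∀ x y : {b : D.B // b ≠ tv ∧ b ≠ s0}, N.Adj x y →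
      mmVal (contractEdge G u v) {z : {x : V // x ≠ v} |
        (N.deleteEdges {s(x, y)}).Reachable ⟨(D.L.symm z.1).1, pf1 z, pf2 z⟩ x} ≤ k := by
    intro x y hadjN
    rcases (hNadj x y).mp hadjN with ⟨hne, hold | ⟨hx, hy⟩ | ⟨hx, hy⟩⟩
    · have hside : {z : {x : V // x ≠ v} |
          (N.deleteEdges {s(x, y)}).Reachable ⟨(D.L.symm z.1).1, pf1 z, pf2 z⟩ x}
          = Subtype.val ⁻¹' (D.side x.1 y.1) := by
        ext z
        exact side_old hN_tv hN_s ha_tv hb_tv hab hnab hNadj x y hold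
          (D.L.symm z.1).1 (pf1 z) (pf2 z)
      rw [hside]
      exact le_trans (mmVal_contract_le G u v huv _) (hw x.1 y.1 hold)
    · have hside : {z : {x : V // x ≠ v} |
          (N.deleteEdges {s(x, y)}).Reachable ⟨(D.L.symm z.1).1, pf1 z, pf2 z⟩ x}
          = Subtype.val ⁻¹' (D.side a₀ s0) := by
        ext z
        exact side_new hT hN_tv hN_s ha_tv hab hnab hNadj x y hx hy
          (D.L.symm z.1).1 (pf1 z) (pf2 z)
      rw [hside]
      exact le_trans (mmVal_contract_le G u v huv _) (hw a₀ s0 hsa.symm)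
    · have hN_s2 : T.neighborSet s0 = {tv, b₀, a₀} := by rw [hN_s, Set.pair_comm a₀ b₀]
      have hNadj2 : ∀ x y : {b : D.B // b ≠ tv ∧ b ≠ s0}, N.Adj x y ↔ x ≠ y ∧
          (T.Adj x.1 y.1 ∨ (x.1 = b₀ ∧ y.1 = a₀) ∨ (x.1 = a₀ ∧ y.1 = b₀)) := by
        intro x2 y2
        rw [hNadj x2 y2]
        tauto
      have hside : {z : {x : V // x ≠ v} |
          (N.deleteEdges {s(x, y)}).Reachable ⟨(D.L.symm z.1).1, pf1 z, pf2 z⟩ x}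
          = Subtype.val ⁻¹' (D.side b₀ s0) := by
        ext z
        exact side_new hT hN_tv hN_s2 hb_tv hab.symm (fun h => hnab h.symm) hNadj2 x y hx hy
          (D.L.symm z.1).1 (pf1 z) (pf2 z)
      rw [hside]
      exact le_trans (mmVal_contract_le G u v huv _) (hw b₀ s0 hsb.symm)
  exact ⟨⟨{b : D.B // b ≠ tv ∧ b ≠ s0}, inferInstance, N, ⟨hconn, hacyc⟩, hsubc,
    { toFun := fun z => ⟨D.L ⟨z.1.1, pfT z⟩, pfv z⟩
      invFun := fun x => ⟨⟨(D.L.symm x.1).1, pf1 x, pf2 x⟩, pf3 x⟩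
      left_inv := by
        intro z
        refine Subtype.ext (Subtype.ext ?_)
        simp
      right_inv := by
        intro x
        have hgen : ∀ h, D.L (⟨(D.L.symm x.1).1, h⟩ :
            {b : D.B // (T.neighborSet b).ncard = 1}) = x.1 := by
          intro h
          rw [show (⟨(D.L.symm x.1).1, h⟩ : {b : D.B // (T.neighborSet b).ncard = 1})
            = D.L.symm x.1 from Subtype.ext rfl, Equiv.apply_symm_apply]
        exact Subtype.ext (hgen _) }⟩,
    fun x y h => hwidth x y h⟩

lemma sym2_map_eq {α β : Type*} (f : α → β) {a b x y : α} (h : s(a, b) = s(x, y)) :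
    s(f a, f b) = s(f x, f y) := by
  rw [Sym2.eq_iff] at h ⊢
  rcases h with ⟨h1, h2⟩ | ⟨h1, h2⟩
  · exact Or.inl ⟨congrArg f h1, congrArg f h2⟩
  · exact Or.inr ⟨congrArg f h1, congrArg f h2⟩

lemma mmVal_le_card {V : Type} [Finite V] (G : SimpleGraph V) (A : Set V) :
    mmVal G A ≤ Nat.card V := by
  classical
  have : Fintype V := Fintype.ofFinite V
  rw [mmVal]
  refine csSup_le ⟨0, ∅, by simp, by simp, by simp⟩ ?_
  rintro n ⟨M, h1, h2, rfl⟩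
  have hinj : Set.InjOn Prod.fst (M : Set (V × V)) := by
    intro p hp q hq h
    by_contra hne
    exact (h2 p hp q hq hne).1 h
  calc M.card = (M.image Prod.fst).card := (Finset.card_image_of_injOn hinj).symm
    _ ≤ Fintype.card V := Finset.card_le_univ _
    _ = Nat.card V := Nat.card_eq_fintype_card.symm

lemma widthLE_card {V : Type} [Finite V] {G : SimpleGraph V} (D : BranchDecomp G) :
    D.widthLE (Nat.card V) := fun _ _ _ => mmVal_le_card G _

lemma no_decomp_card_one {V : Type} {G : SimpleGraph V} (hV : Nat.card V = 1)
    (D : BranchDecomp G) : False := by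
  classical
  have finB := D.finB
  have : Fintype D.B := Fintype.ofFinite D.B
  have hcardL : Nat.card {b : D.B // (D.T.neighborSet b).ncard = 1} = 1 := by
    rw [Nat.card_congr D.L, hV]
  obtain ⟨ℓ, hℓ⟩ := Nat.card_eq_one_iff_exists.mp hcardL
  have huniq : ∀ b : D.B, (D.T.neighborSet b).ncard = 1 → b = ℓ.1 := by
    intro b hb
    exact congrArg Subtype.val (hℓ ⟨b, hb⟩)
  have hdeg : ∀ b : D.B, (D.T.neighborSet b).ncard = D.T.degree b := by
    intro b
    rw [← card_neighborFinset_eq_degree, neighborFinset_def, Set.ncard_eq_toFinset_card']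
  have hsum := D.T.sum_degrees_eq_twice_card_edges
  have hedge : D.T.edgeFinset.card + 1 = Fintype.card D.B := D.isTree.card_edgeFinset
  have hsplit : ∑ b, D.T.degree b = D.T.degree ℓ.1 + ∑ b ∈ Finset.univ.erase ℓ.1, D.T.degree b :=
    (Finset.add_sum_erase _ _ (Finset.mem_univ _)).symm
  have h3 : ∑ b ∈ Finset.univ.erase ℓ.1, D.T.degree b = 3 * (Fintype.card D.B - 1) := by
    rw [Finset.sum_congr rfl (fun b hb => ?_), Finset.sum_const, Finset.card_erase_of_mem
      (Finset.mem_univ _), Finset.card_univ, smul_eq_mul, mul_comm]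
    rcases D.subcubic b with h | h
    · exact absurd (huniq b h) (Finset.mem_erase.mp hb).1
    · rw [← hdeg, h]
  have hd1 : D.T.degree ℓ.1 = 1 := by rw [← hdeg, ℓ.2]
  have hpos : 1 ≤ Fintype.card D.B := Fintype.card_pos_iff.mpr ⟨ℓ.1⟩
  rw [hsplit, hd1, h3] at hsum
  omega

set_option maxHeartbeats 1000000 in
lemma exists_decomp_attach {V : Type} [Finite V] (G : SimpleGraph V) (u v : V)
    (hne : u ≠ v) {H : SimpleGraph {x : V // x ≠ v}} (D : BranchDecomp H) :
    Nonempty (BranchDecomp G) := by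
  classical
  have finB := D.finB
  set T := D.T with hT_def
  set ℓ : D.B := (D.L.symm ⟨u, hne⟩).1 with hℓ_def
  have hℓ : (T.neighborSet ℓ).ncard = 1 := (D.L.symm ⟨u, hne⟩).2
  obtain ⟨n₀, hn₀⟩ := Set.ncard_eq_one.mp hℓ
  set T2 : SimpleGraph (D.B ⊕ Bool) := SimpleGraph.fromRel (fun x y =>
    (∃ a b, x = Sum.inl a ∧ y = Sum.inl b ∧ T.Adj a b) ∨
    (x = Sum.inl ℓ ∧ ∃ t, y = Sum.inr t)) with hT2_def
  have hadj2 : ∀ x y, T2.Adj x y ↔ x ≠ y ∧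
      ((∃ a b, x = Sum.inl a ∧ y = Sum.inl b ∧ T.Adj a b) ∨
       (x = Sum.inl ℓ ∧ ∃ t, y = Sum.inr t) ∨
       (y = Sum.inl ℓ ∧ ∃ t, x = Sum.inr t)) := by
    intro x y
    rw [hT2_def, SimpleGraph.fromRel_adj]
    constructor
    · rintro ⟨h1, (⟨a, b, rfl, rfl, h⟩ | h) | (⟨a, b, rfl, rfl, h⟩ | h)⟩
      · exact ⟨h1, Or.inl ⟨a, b, rfl, rfl, h⟩⟩
      · exact ⟨h1, Or.inr (Or.inl h)⟩
      · exact ⟨h1, Or.inl ⟨b, a, rfl, rfl, h.symm⟩⟩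
      · exact ⟨h1, Or.inr (Or.inr h)⟩
    · rintro ⟨h1, (⟨a, b, rfl, rfl, h⟩ | h | h)⟩
      · exact ⟨h1, Or.inl (Or.inl ⟨a, b, rfl, rfl, h⟩)⟩
      · exact ⟨h1, Or.inl (Or.inr h)⟩
      · exact ⟨h1, Or.inr (Or.inr h)⟩
  have hadj_inl : ∀ a b, T2.Adj (Sum.inl a) (Sum.inl b) ↔ T.Adj a b := by
    intro a b
    rw [hadj2]
    constructor
    · rintro ⟨h1, ⟨a', b', ha, hb, h⟩ | ⟨-, t, ht⟩ | ⟨-, t, ht⟩⟩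
      · rw [Sum.inl.injEq] at ha hb
        rwa [ha, hb]
      · exact absurd ht (by simp)
      · exact absurd ht (by simp)
    · intro h
      exact ⟨by simp [h.ne], Or.inl ⟨a, b, rfl, rfl, h⟩⟩
  have hadj_inr : ∀ (t : Bool) w, T2.Adj (Sum.inr t) w ↔ w = Sum.inl ℓ := by
    intro t w
    rw [hadj2]
    constructor
    · rintro ⟨h1, ⟨a', b', ha, hb, h⟩ | ⟨ht, -⟩ | ⟨hw, -⟩⟩
      · exact absurd ha (by simp)
      · exact absurd ht (by simp)
      · exact hw
    · rintro rfl
      exact ⟨by simp, Or.inr (Or.inr ⟨rfl, t, rfl⟩)⟩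
  -- connectivity
  have hreach_ℓ : ∀ x : D.B ⊕ Bool, T2.Reachable x (Sum.inl ℓ) := by
    rintro (a | t)
    · exact reach_transfer Sum.inl (D.isTree.isConnected.preconnected a ℓ)
        (fun p q h _ => ((hadj_inl p q).mpr h).reachable)
    · exact ((hadj_inr t (Sum.inl ℓ)).mpr rfl).reachable
  have hconn : T2.Connected :=
    (connected_iff _).mpr ⟨fun x y => (hreach_ℓ x).trans (hreach_ℓ y).symm, ⟨Sum.inl ℓ⟩⟩
  -- acyclicity
  have key2 : ∀ (t : Bool) (x y : D.B ⊕ Bool), s(x, y) = s(Sum.inl ℓ, Sum.inr t) →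
      ¬ (T2.deleteEdges {s(x, y)}).Reachable (Sum.inl ℓ) (Sum.inr t) := by
    intro t x y hxy hre
    have : (Sum.inr t : D.B ⊕ Bool) ∈ {z : D.B ⊕ Bool | z ≠ Sum.inr t} := by
      refine reach_closed (S := {z : D.B ⊕ Bool | z ≠ Sum.inr t}) ?_ hre (by simp)
      intro p q hpq hp
      obtain ⟨hadj', hne_e⟩ := SimpleGraph.deleteEdges_adj.mp hpq
      rintro rfl
      have hpℓ : p = Sum.inl ℓ := (hadj_inr t p).mp hadj'.symm
      subst hpℓ
      rw [Set.mem_singleton_iff, hxy] at hne_e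
      exact hne_e rfl
    exact this rfl
  have hacyc : T2.IsAcyclic := by
    rw [isAcyclic_iff_forall_edge_isBridge]
    intro e he
    induction e with
    | h x y =>
      rw [SimpleGraph.mem_edgeSet] at he
      rw [isBridge_iff]
      refine fun hre => ?_
      rcases (hadj2 x y).mp he with ⟨hne', ⟨a, b, rfl, rfl, hadjT⟩ | ⟨hx, t, hy⟩ | ⟨hy, t, hx⟩⟩
      · -- old edge
        have hmem : (Sum.inl b : D.B ⊕ Bool) ∈ {z : D.B ⊕ Bool |
            (T.deleteEdges {s(a, b)}).Reachable (Sum.elim id (fun _ => ℓ) z) a} := by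
          refine reach_closed ?_ hre (Reachable.refl _)
          intro p q hpq hpS
          obtain ⟨hadj', hne_e⟩ := SimpleGraph.deleteEdges_adj.mp hpq
          rw [Set.mem_singleton_iff] at hne_e
          rcases (hadj2 p q).mp hadj' with ⟨h1, ⟨c, d, rfl, rfl, h⟩ | ⟨hp, t, hq⟩ | ⟨hq, t, hp⟩⟩
          · refine Reachable.trans (Adj.reachable (SimpleGraph.deleteEdges_adj.mpr
              ⟨h.symm, ?_⟩)) hpS
            rw [Set.mem_singleton_iff, Sym2.eq_swap]
            exact fun hh => hne_e (sym2_map_eq Sum.inl hh)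
          · subst hp; subst hq
            exact hpS
          · subst hq; subst hp
            exact hpS
        have : (T.deleteEdges {s(a, b)}).Reachable b a := hmem
        exact bridge_of_tree D.isTree hadjT this.symm
      · subst hx; subst hy
        exact key2 t _ _ rfl hre
      · subst hy; subst hx
        refine key2 t _ _ (Sym2.eq_swap) hre.symm
  -- degrees
  have hN_inr : ∀ t : Bool, T2.neighborSet (Sum.inr t) = {Sum.inl ℓ} := by
    intro t
    ext w
    rw [SimpleGraph.mem_neighborSet, hadj_inr, Set.mem_singleton_iff]
  have hN_inl : ∀ a, a ≠ ℓ → T2.neighborSet (Sum.inl a) = Sum.inl '' (T.neighborSet a) := by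
    intro a ha
    ext w
    rw [SimpleGraph.mem_neighborSet]
    constructor
    · intro h
      rcases (hadj2 _ w).mp h with ⟨h1, ⟨a', b', ha', hb', hadjT⟩ | ⟨hp, t, hq⟩ | ⟨hq, t, hp⟩⟩
      · rw [Sum.inl.injEq] at ha'
        exact ⟨b', by rw [ha']; exact hadjT, hb'.symm⟩
      · exact absurd (Sum.inl.injEq .. ▸ hp) (by simpa using ha)
      · exact absurd hp (by simp)
    · rintro ⟨b, hb, rfl⟩
      exact (hadj_inl a b).mpr hb
  have hN_ℓ : T2.neighborSet (Sum.inl ℓ) =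
      {Sum.inl n₀, Sum.inr true, Sum.inr false} := by
    ext w
    rw [SimpleGraph.mem_neighborSet]
    constructor
    · intro h
      rcases (hadj2 _ w).mp h with ⟨h1, ⟨a', b', ha', hb', hadjT⟩ | ⟨-, t, hq⟩ | ⟨hq, t, hp⟩⟩
      · rw [Sum.inl.injEq] at ha'
        subst hb'
        have : b' ∈ T.neighborSet ℓ := by rwa [← ha'] at hadjT
        rw [hn₀, Set.mem_singleton_iff] at this
        subst this
        simp
      · subst hq
        rcases t with _ | _ <;> simp
      · exact absurd hp (by simp)
    · intro hw
      rcases hw with rfl | rfl | rfl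
      · refine (hadj_inl ℓ n₀).mpr ?_
        rw [← SimpleGraph.mem_neighborSet, hn₀]
        rfl
      · exact ((hadj_inr true _).mpr rfl).symm
      · exact ((hadj_inr false _).mpr rfl).symm
  have hcard_ℓ : (T2.neighborSet (Sum.inl ℓ)).ncard = 3 := by
    rw [hN_ℓ, Set.ncard_insert_of_notMem (by simp), Set.ncard_insert_of_notMem (by simp),
      Set.ncard_singleton]
  have hdeg_inl : ∀ a, a ≠ ℓ →
      (T2.neighborSet (Sum.inl a)).ncard = (T.neighborSet a).ncard := by
    intro a ha
    rw [hN_inl a ha, Set.ncard_image_of_injective _ Sum.inl_injective]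
  have hsubc : ∀ z : D.B ⊕ Bool,
      (T2.neighborSet z).ncard = 1 ∨ (T2.neighborSet z).ncard = 3 := by
    rintro (a | t)
    · by_cases ha : a = ℓ
      · subst ha
        right
        exact hcard_ℓ
      · rw [hdeg_inl a ha]
        exact D.subcubic a
    · left
      rw [hN_inr, Set.ncard_singleton]
  -- the leaf bijection
  set fcore : D.B ⊕ Bool → V := Sum.elim
    (fun a => if h : (T.neighborSet a).ncard = 1 then ((D.L ⟨a, h⟩ : {x : V // x ≠ v}) : V) else v)
    (fun t => if t then v else u) with hfcore_def
  have hval_inl : ∀ (a : D.B) (h : (T.neighborSet a).ncard = 1),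
      fcore (Sum.inl a) = ((D.L ⟨a, h⟩ : {x : V // x ≠ v}) : V) := by
    intro a h
    rw [hfcore_def]
    simp only [Sum.elim_inl]
    rw [dif_pos h]
  have hLne_v : ∀ (a : D.B) (h : (T.neighborSet a).ncard = 1),
      ((D.L ⟨a, h⟩ : {x : V // x ≠ v}) : V) ≠ v := fun a h => (D.L ⟨a, h⟩).2
  have hLne_u : ∀ (a : D.B) (h : (T.neighborSet a).ncard = 1), a ≠ ℓ →
      ((D.L ⟨a, h⟩ : {x : V // x ≠ v}) : V) ≠ u := by
    intro a h haℓ hu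
    have h1 : D.L ⟨a, h⟩ = ⟨u, hne⟩ := Subtype.ext hu
    have h2 : (⟨a, h⟩ : {b : D.B // (T.neighborSet b).ncard = 1}) = D.L.symm ⟨u, hne⟩ :=
      (Equiv.apply_eq_iff_eq_symm_apply D.L).mp h1
    exact haℓ (congrArg Subtype.val h2)
  have hclass : ∀ z : {b : D.B ⊕ Bool // (T2.neighborSet b).ncard = 1},
      (∃ t, z.1 = Sum.inr t) ∨
      (∃ a, z.1 = Sum.inl a ∧ (T.neighborSet a).ncard = 1 ∧ a ≠ ℓ) := by
    rintro ⟨(a | t), hz⟩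
    · right
      by_cases ha : a = ℓ
      · subst ha
        rw [hcard_ℓ] at hz
        omega
      · exact ⟨a, rfl, by rwa [hdeg_inl a ha] at hz, ha⟩
    · exact Or.inl ⟨t, rfl⟩
  have hbij : Function.Bijective
      (fun z : {b : D.B ⊕ Bool // (T2.neighborSet b).ncard = 1} => fcore z.1) := by
    constructor
    · intro z z' hzz
      have hzz' : fcore z.1 = fcore z'.1 := hzz
      rcases hclass z with ⟨t, hz⟩ | ⟨a, hz, hl, haℓ⟩ <;>
        rcases hclass z' with ⟨t', hz'⟩ | ⟨a', hz', hl', haℓ'⟩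
      · rw [hz, hz'] at hzz'
        have htt : t = t' := by
          rcases t with _ | _ <;> rcases t' with _ | _
          · rfl
          · exact absurd (show u = v from hzz') hne
          · exact absurd (show u = v from hzz'.symm) hne
          · rfl
        exact Subtype.ext (hz.trans (htt ▸ hz'.symm))
      · exfalso
        rw [hz, hz', hval_inl a' hl'] at hzz'
        rcases t with _ | _
        · exact hLne_u a' hl' haℓ' (show u = _ from hzz').symm
        · exact hLne_v a' hl' (show v = _ from hzz').symm
      · exfalso
        rw [hz, hz', hval_inl a hl] at hzz'
        rcases t' with _ | _
        · exact hLne_u a hl haℓ (show _ = u from hzz')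
        · exact hLne_v a hl (show _ = v from hzz')
      · rw [hz, hz', hval_inl a hl, hval_inl a' hl'] at hzz'
        have h1 : D.L ⟨a, hl⟩ = D.L ⟨a', hl'⟩ := Subtype.ext hzz'
        have h2 := D.L.injective h1
        have haa : a = a' := congrArg Subtype.val h2
        have h3 : z.1 = z'.1 := by rw [hz, hz', haa]
        exact Subtype.ext h3
    · intro y
      by_cases hyv : y = v
      · refine ⟨⟨Sum.inr true, by rw [hN_inr, Set.ncard_singleton]⟩, ?_⟩
        simp [hfcore_def, hyv]
      · by_cases hyu : y = u
        · refine ⟨⟨Sum.inr false, by rw [hN_inr, Set.ncard_singleton]⟩, ?_⟩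
          simp [hfcore_def, hyu]
        · set a := (D.L.symm ⟨y, hyv⟩).1 with ha_def
          have hl : (T.neighborSet a).ncard = 1 := (D.L.symm ⟨y, hyv⟩).2
          have haℓ : a ≠ ℓ := by
            intro h
            have h2 : D.L.symm ⟨y, hyv⟩ = D.L.symm ⟨u, hne⟩ := Subtype.ext h
            have h3 := congrArg D.L h2
            rw [Equiv.apply_symm_apply, Equiv.apply_symm_apply] at h3
            exact hyu (congrArg Subtype.val h3)
          refine ⟨⟨Sum.inl a, by rwa [hdeg_inl a haℓ]⟩, ?_⟩
          show fcore (Sum.inl a) = y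
          rw [hval_inl a hl]
          rw [show (⟨a, hl⟩ : {b : D.B // (T.neighborSet b).ncard = 1}) = D.L.symm ⟨y, hyv⟩
            from Subtype.ext rfl, Equiv.apply_symm_apply]
  exact ⟨⟨D.B ⊕ Bool, inferInstance, T2, ⟨hconn, hacyc⟩, hsubc, Equiv.ofBijective _ hbij⟩⟩

/-- contracting an edge does not increase mm-width. -/
theorem mmw_contractEdge_le {V : Type} [Finite V] (G : SimpleGraph V) (u v : V)
    (huv : G.Adj u v) : mmw (contractEdge G u v) ≤ mmw G := by
  classical
  simp only [mmw]
  rcases Set.eq_empty_or_nonempty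
    {k | ∃ D' : BranchDecomp (contractEdge G u v), D'.widthLE k} with h | h
  · rw [h, Nat.sInf_empty]
    exact Nat.zero_le _
  · obtain ⟨k0, D0, -⟩ := h
    have hne : u ≠ v := huv.ne
    have : Fintype V := Fintype.ofFinite V
    have hcard' : Nat.card {x : V // x ≠ v} = Nat.card V - 1 := by
      rw [Nat.card_eq_fintype_card, Nat.card_eq_fintype_card]
      calc Fintype.card {x : V // x ≠ v}
          = Fintype.card V - Fintype.card {x : V // x = v} := Fintype.card_subtype_compl _
        _ = Fintype.card V - 1 := by rw [Fintype.card_subtype_eq]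
    have h1 : Nat.card {x : V // x ≠ v} ≠ 1 := fun h1 => no_decomp_card_one h1 D0
    haveI : Nonempty {x : V // x ≠ v} := ⟨⟨u, hne⟩⟩
    have h0 : 0 < Nat.card {x : V // x ≠ v} := Nat.card_pos
    have hV3 : 3 ≤ Nat.card V := by omega
    obtain ⟨D1⟩ := exists_decomp_attach G u v hne D0
    have hSne : {k | ∃ D : BranchDecomp G, D.widthLE k}.Nonempty :=
      ⟨Nat.card V, D1, widthLE_card D1⟩
    obtain ⟨D, hD⟩ := Nat.sInf_mem hSne
    obtain ⟨D', hD'⟩ := exists_decomp_contract G u v huv hV3 _ D hD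
    exact Nat.sInf_le ⟨D', hD'⟩
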